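/- Let σ = (v_0, ..., v_{n-1}) be a permutation of the vertex set of a graph G on n vertices, and let 0 < t < n. Call an edge {v_i, v_j} σ-short if |i − j| ≤ t. Suppose there exist δ ∈ (0,1) and ε > 0 with t = δεn such that every vertex subset S of size at most εn spans at most (1+δ)|S| edges of G. Then the number of σ-short edges of G is at most ((1+δ)/(1−δ))·n. -/

import Mathlib

/-- `σ` separates two (disjoint) edges `e`, `f` of a graph: all vertices of one
precede all vertices of the other in the order given by `σ`. -/
def Separates {V : Type*} (σ : V → ℕ) (e f : Sym2 V) : Prop :=
  (∀ u ∈ e, ∀ w ∈ f, σ u < σ w) ∨ (∀ u ∈ f, ∀ w ∈ e, σ u < σ w)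

/-- A finite family of linear orders (injective maps to ℕ) on the vertices of `G`
is pairwise suitable if every pair of disjoint edges is separated by some member. -/
def PairwiseSuitable {V : Type*} (G : SimpleGraph V) (F : Finset (V → ℕ)) : Prop :=
  (∀ σ ∈ F, Function.Injective σ) ∧
  ∀ e ∈ G.edgeSet, ∀ f ∈ G.edgeSet, (∀ v, v ∈ e → v ∉ f) → ∃ σ ∈ F, Separates σ e f

/-- The separation dimension of `G`: minimum size of a pairwise suitable family. -/
noncomputable def sdim {V : Type*} (G : SimpleGraph V) : ℕ :=
  sInf {k | ∃ F : Finset (V → ℕ), PairwiseSuitable G F ∧ F.card = k}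

set_option maxHeartbeats 1000000

open Finset

theorem stmt10 (n : ℕ) (G : SimpleGraph (Fin n)) (σ : Equiv.Perm (Fin n))
    (t : ℕ) (ht0 : 0 < t) (htn : t < n) (δ ε : ℝ)
    (hδ0 : 0 < δ) (hδ1 : δ < 1) (hε : 0 < ε)
    (htval : (t : ℝ) = δ * ε * n)
    (hexp : ∀ S : Set (Fin n), (S.ncard : ℝ) ≤ ε * n →
      (({e ∈ G.edgeSet | ∀ v ∈ e, v ∈ S}).ncard : ℝ) ≤ (1 + δ) * S.ncard) :
    (({e ∈ G.edgeSet |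
        ∃ a b : Fin n, e = s(a, b) ∧ ((σ a : ℤ) - (σ b : ℤ)).natAbs ≤ t}).ncard : ℝ)
      ≤ ((1 + δ) / (1 - δ)) * n := by
  classical
  have hn2 : 2 ≤ n := by omega
  -- positions
  set P : Fin n → ℕ := fun v => (σ v : ℕ) with hP
  have hPinj : Function.Injective P := by
    intro u v huv
    exact σ.injective (Fin.val_injective huv)
  have hPlt : ∀ v, P v < n := fun v => (σ v).isLt
  -- the real step size s
  have hδ1' : (0:ℝ) < 1 - δ := by linarith
  have hεn : (t : ℝ) = δ * (ε * n) := by rw [htval]; ring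
  have hεnpos : (0:ℝ) < ε * n := by
    have : (0:ℝ) < n := by exact_mod_cast (by omega : 0 < n)
    positivity
  have htlt : (t : ℝ) < ε * n := by
    nlinarith [hεn, hεnpos]
  set s : ℝ := ε * n - t with hs_def
  have hs : 0 < s := by simp only [hs_def]; linarith
  set d : ℕ := ⌈s⌉₊ - 1 with hd_def
  have hceil_pos : 1 ≤ ⌈s⌉₊ := Nat.one_le_ceil_iff.mpr hs
  have hd1 : (⌈s⌉₊ : ℕ) = d + 1 := by omega
  have hdR : (d : ℝ) ≤ s := by
    have h1 : (⌈s⌉₊ : ℝ) < s + 1 := Nat.ceil_lt_add_one hs.le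
    have h2 : ((d : ℕ) : ℝ) = (⌈s⌉₊ : ℝ) - 1 := by
      rw [hd_def]; push_cast [hceil_pos]; ring
    linarith
  -- block starts
  set bs : ℕ → ℕ := fun k => ⌈(k : ℝ) * s⌉₊ with hbs
  have hbs0 : bs 0 = 0 := by simp [hbs]
  have hbsLB : ∀ k : ℕ, (k : ℝ) * s ≤ bs k := fun k => Nat.le_ceil _
  have hbsUB : ∀ k : ℕ, (bs k : ℝ) < (k:ℝ) * s + 1 := by
    intro k
    exact Nat.ceil_lt_add_one (by positivity)
  have hbsmono : Monotone bs := by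
    intro i j hij
    exact Nat.ceil_le_ceil (by
      have : (i:ℝ) ≤ j := by exact_mod_cast hij
      nlinarith)
  have hstepU : ∀ k, bs (k+1) ≤ bs k + (d+1) := by
    intro k
    have : ((k:ℝ)+1) * s = (k:ℝ) * s + s := by ring
    calc bs (k+1) = ⌈((k:ℝ)+1) * s⌉₊ := by simp [hbs]
      _ = ⌈(k:ℝ) * s + s⌉₊ := by rw [this]
      _ ≤ ⌈(k:ℝ) * s⌉₊ + ⌈s⌉₊ := Nat.ceil_add_le _ _
      _ = bs k + (d+1) := by rw [hd1]
  have hstepL : ∀ k, bs k + d ≤ bs (k+1) := by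
    intro k
    have h1 : ((k:ℝ)+1) * s ≤ bs (k+1) := by exact_mod_cast hbsLB (k+1)
    have h2 : (bs k : ℝ) < k * s + 1 := hbsUB k
    have h3 : ((bs k + d : ℕ) : ℝ) < (bs (k+1) : ℝ) + 1 := by push_cast; nlinarith
    have h4 : bs k + d < bs (k+1) + 1 := by exact_mod_cast h3
    omega
  -- number of blocks
  set M : ℕ := ⌊((n:ℝ) - 1)/s⌋₊ with hM
  set m : ℕ := M + 1 with hm
  have hMle : (M : ℝ) * s ≤ (n:ℝ) - 1 := by
    have h0 : (0:ℝ) ≤ ((n:ℝ) - 1)/s := by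
      have h1n : (1:ℝ) ≤ n := by exact_mod_cast (by omega : 1 ≤ n)
      exact div_nonneg (by linarith) hs.le
    have := Nat.floor_le h0
    calc (M:ℝ) * s ≤ (((n:ℝ)-1)/s) * s := by nlinarith [this]
      _ = (n:ℝ) - 1 := by field_simp
  have hbsM : bs M ≤ n - 1 := by
    have h1 : (bs M : ℝ) < (n:ℝ) - 1 + 1 := lt_of_lt_of_le (hbsUB M) (by linarith)
    have : (bs M : ℝ) < n := by linarith
    have : bs M < n := by exact_mod_cast this
    omega
  have hbsm : n ≤ bs m := by
    have h1 : ((n:ℝ) - 1)/s < m := by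
      rw [hm]; push_cast; exact Nat.lt_floor_add_one _
    have h2 : (n:ℝ) - 1 < (m:ℝ) * s := by
      calc (n:ℝ) - 1 = (((n:ℝ)-1)/s) * s := by field_simp
        _ < (m:ℝ) * s := by nlinarith
    have h3 : (n:ℝ) - 1 < bs m := lt_of_lt_of_le h2 (hbsLB m)
    have : (n:ℝ) < (bs m : ℝ) + 1 := by linarith
    have : n < bs m + 1 := by exact_mod_cast this
    omega
  -- block vertex sets and edge sets
  set SB : ℕ → Finset (Fin n) := fun k =>
    univ.filter (fun v => bs k ≤ P v ∧ P v < bs k + (d + t)) with hSB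
  set EB : ℕ → Finset (Sym2 (Fin n)) := fun k =>
    univ.filter (fun e => e ∈ G.edgeSet ∧ ∀ v ∈ e, v ∈ SB k) with hEB
  set isExc : Sym2 (Fin n) → Prop := fun e =>
    ∃ k, k + 1 < m ∧ bs (k+1) = bs k + (d+1) ∧
      ∃ u w : Fin n, e = s(u, w) ∧ P u = bs k + d ∧ P w = bs k + d + t with hisExc
  set Exc : Finset (Sym2 (Fin n)) := univ.filter isExc with hExc
  set Ash : Finset (Sym2 (Fin n)) := univ.filter (fun e => e ∈ G.edgeSet ∧
    ∃ a b : Fin n, e = s(a, b) ∧ ((σ a : ℤ) - (σ b : ℤ)).natAbs ≤ t) with hAsh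
  -- the goal's set is ↑Ash
  have hset : {e ∈ G.edgeSet |
      ∃ a b : Fin n, e = s(a, b) ∧ ((σ a : ℤ) - (σ b : ℤ)).natAbs ≤ t} = (↑Ash : Set (Sym2 (Fin n))) := by
    ext e
    simp [hAsh, Set.mem_setOf_eq]
  rw [hset, Set.ncard_coe_finset]
  -- main covering claim
  have hcover : Ash ⊆ ((range m).biUnion EB) ∪ Exc := by
    have key : ∀ u w : Fin n, s(u,w) ∈ G.edgeSet → P u ≤ P w → P w ≤ P u + t →
        s(u,w) ∈ ((range m).biUnion EB) ∪ Exc := by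
      intro u w huwE hle hgap
      set p := P u with hp
      set q := P w with hq
      have hk0 : bs (Nat.findGreatest (fun j => bs j ≤ p) m) ≤ p :=
        Nat.findGreatest_spec (P := fun j => bs j ≤ p) (Nat.zero_le m)
          (by show bs 0 ≤ p; rw [hbs0]; exact Nat.zero_le p)
      have hkm : Nat.findGreatest (fun j => bs j ≤ p) m < m := by
        have hkle : Nat.findGreatest (fun j => bs j ≤ p) m ≤ m :=
          Nat.findGreatest_le m
        rcases eq_or_lt_of_le hkle with h | h
        · exfalso
          have h1 : bs m ≤ p := by rw [← h]; exact hk0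
          have h2 : p < n := hPlt u
          omega
        · exact h
      have hk1 : ¬ bs (Nat.findGreatest (fun j => bs j ≤ p) m + 1) ≤ p :=
        Nat.findGreatest_is_greatest (P := fun j => bs j ≤ p)
          (Nat.lt_succ_self _) hkm
      set k := Nat.findGreatest (fun j => bs j ≤ p) m with hk
      have hpd : p ≤ bs k + d := by have := hstepU k; omega
      by_cases hqlt : q < bs k + (d + t)
      · apply mem_union_left
        refine mem_biUnion.mpr ⟨k, mem_range.mpr hkm, ?_⟩
        simp only [hEB, mem_filter, mem_univ, true_and]
        refine ⟨huwE, ?_⟩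
        intro v hv
        rw [Sym2.mem_iff] at hv
        simp only [hSB, mem_filter, mem_univ, true_and]
        rcases hv with rfl | rfl
        · exact ⟨hk0, by omega⟩
        · exact ⟨le_trans hk0 hle, hqlt⟩
      · apply mem_union_right
        simp only [hExc, mem_filter, mem_univ, true_and, hisExc]
        have hp' : p = bs k + d := by omega
        have hq' : q = bs k + d + t := by omega
        have hstep : bs (k+1) = bs k + (d+1) := by have := hstepU k; omega
        have hk1m : k + 1 < m := by
          rcases eq_or_lt_of_le (show k + 1 ≤ m from hkm) with h | h
          · exfalso
            have hbm : bs m = bs k + (d+1) := by rw [← h]; exact hstep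
            have hqn : q < n := hPlt w
            omega
          · exact h
        exact ⟨k, hk1m, hstep, u, w, rfl, hp', hq'⟩
    intro e he
    simp only [hAsh, mem_filter, mem_univ, true_and] at he
    obtain ⟨heE, u, w, heq, hnat⟩ := he
    subst heq
    have hnat' : (((P u : ℕ) : ℤ) - ((P w : ℕ) : ℤ)).natAbs ≤ t := hnat
    rcases le_total (P u) (P w) with h | h
    · exact key u w heE h (by omega)
    · rw [Sym2.eq_swap]
      rw [Sym2.eq_swap] at heE
      exact key w u heE h (by omega)
  -- cardinality of vertex blocks
  have hSBcard : ∀ k, (SB k).card ≤ d + t := by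
    intro k
    have himg : (SB k).image P ⊆ Finset.Ico (bs k) (bs k + (d + t)) := by
      intro x hx
      simp only [mem_image] at hx
      obtain ⟨v, hv, rfl⟩ := hx
      simp only [hSB, mem_filter] at hv
      exact Finset.mem_Ico.mpr hv.2
    calc (SB k).card = ((SB k).image P).card := (Finset.card_image_of_injective _ hPinj).symm
      _ ≤ (Finset.Ico (bs k) (bs k + (d+t))).card := card_le_card himg
      _ = d + t := by rw [Nat.card_Ico]; omega
  have hSBMcard : (SB M).card ≤ n - bs M := by
    have himg : (SB M).image P ⊆ Finset.Ico (bs M) n := by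
      intro x hx
      simp only [mem_image] at hx
      obtain ⟨v, hv, rfl⟩ := hx
      simp only [hSB, mem_filter] at hv
      exact Finset.mem_Ico.mpr ⟨hv.2.1, hPlt v⟩
    calc (SB M).card = ((SB M).image P).card := (Finset.card_image_of_injective _ hPinj).symm
      _ ≤ (Finset.Ico (bs M) n).card := card_le_card himg
      _ = n - bs M := Nat.card_Ico _ _
  -- expansion per block
  have hexpB : ∀ k, ((EB k).card : ℝ) ≤ (1 + δ) * ((SB k).card : ℝ) := by
    intro k
    have hcard : (((↑(SB k) : Set (Fin n)).ncard : ℕ) : ℝ) ≤ ε * n := by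
      rw [Set.ncard_coe_finset]
      have h1 : ((SB k).card : ℝ) ≤ (d:ℝ) + t := by exact_mod_cast hSBcard k
      have h2 : s + (t:ℝ) = ε * n := by rw [hs_def]; ring
      linarith [hdR]
    have h3 := hexp (↑(SB k)) hcard
    have hsetEq : {e | e ∈ G.edgeSet ∧ ∀ v ∈ e, v ∈ (↑(SB k) : Set (Fin n))}
        = (↑(EB k) : Set (Sym2 (Fin n))) := by
      ext e
      simp [hEB]
    rw [hsetEq, Set.ncard_coe_finset, Set.ncard_coe_finset] at h3
    exact h3
  -- exceptional edges
  have hexcard : Exc.card ≤ ∑ k ∈ range M, (bs (k+1) - (bs k + d)) := by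
    set B : Finset ℕ := (range M).filter (fun k => bs (k+1) = bs k + (d+1)) with hB
    have hcard1 : Exc.card ≤ B.card := by
      apply Finset.card_le_card_of_injOn
        (fun e => if h : isExc e then h.choose else 0)
      · intro e he
        simp only [hExc, Finset.coe_filter, Set.mem_setOf_eq, mem_filter, mem_univ, true_and] at he
        simp only [dif_pos he]
        obtain ⟨hk1, hk2, _⟩ := he.choose_spec
        simp only [hB, Finset.coe_filter, Set.mem_setOf_eq, mem_filter, mem_range]
        exact ⟨by omega, hk2⟩
      · intro e he e' he' hfe
        simp only [hExc, Finset.coe_filter, Set.mem_setOf_eq, mem_univ, true_and] at he he'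
        simp only [dif_pos he, dif_pos he'] at hfe
        obtain ⟨_, _, u, w, heq, hu, hw⟩ := he.choose_spec
        obtain ⟨_, _, u', w', heq', hu', hw'⟩ := he'.choose_spec
        rw [← hfe] at hu' hw'
        have huu : u = u' := hPinj (by rw [hu, hu'])
        have hww : w = w' := hPinj (by rw [hw, hw'])
        rw [heq, heq', huu, hww]
    have hcard2 : B.card ≤ ∑ k ∈ range M, (bs (k+1) - (bs k + d)) := by
      calc B.card = ∑ k ∈ B, 1 := by simp
        _ ≤ ∑ k ∈ B, (bs (k+1) - (bs k + d)) := by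
            apply Finset.sum_le_sum
            intro k hk
            simp only [hB, mem_filter] at hk
            omega
        _ ≤ ∑ k ∈ range M, (bs (k+1) - (bs k + d)) := by
            apply Finset.sum_le_sum_of_subset (filter_subset _ _)
    omega
  -- first counting step
  have h1 : Ash.card ≤ ∑ k ∈ range m, (EB k).card + Exc.card := by
    calc Ash.card ≤ (((range m).biUnion EB) ∪ Exc).card := card_le_card hcover
      _ ≤ ((range m).biUnion EB).card + Exc.card := card_union_le _ _
      _ ≤ ∑ k ∈ range m, (EB k).card + Exc.card := by
          gcongr; exact card_biUnion_le
  -- key sum bound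
  have hbadcast : ∀ k, ((bs (k+1) - (bs k + d) : ℕ) : ℝ) = (bs (k+1) : ℝ) - (bs k : ℝ) - d := by
    intro k
    have := hstepL k
    push_cast [this]
    ring
  have hsum : (∑ k ∈ range m, ((SB k).card : ℝ)) + (∑ k ∈ range M, ((bs (k+1) - (bs k + d) : ℕ) : ℝ))
      ≤ (n : ℝ) + M * t := by
    have hper : ∀ k ∈ range M, ((SB k).card : ℝ) + ((bs (k+1) - (bs k + d) : ℕ) : ℝ)
        ≤ ((bs (k+1) : ℝ) - (bs k : ℝ)) + t := by
      intro k _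
      rw [hbadcast k]
      have h1 : ((SB k).card : ℝ) ≤ (d:ℝ) + t := by exact_mod_cast hSBcard k
      linarith
    have hlast : ((SB M).card : ℝ) ≤ (n:ℝ) - bs M := by
      have h2 : bs M ≤ n := by omega
      have h1 : ((SB M).card : ℝ) ≤ ((n - bs M : ℕ) : ℝ) := by exact_mod_cast hSBMcard
      have h3 : ((n - bs M : ℕ) : ℝ) = (n:ℝ) - bs M := by
        push_cast [h2]; ring
      linarith
    have hsplit : (∑ k ∈ range M, ((SB k).card : ℝ)) + ∑ k ∈ range M, ((bs (k+1) - (bs k + d) : ℕ) : ℝ)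
        ≤ ∑ k ∈ range M, (((bs (k+1) : ℝ) - (bs k : ℝ)) + t) := by
      rw [← Finset.sum_add_distrib]
      exact Finset.sum_le_sum hper
    have htele : ∑ k ∈ range M, (((bs (k+1) : ℝ) - (bs k : ℝ)) + t)
        = (bs M : ℝ) - (bs 0 : ℝ) + M * t := by
      rw [Finset.sum_add_distrib, Finset.sum_range_sub (fun k => ((bs k : ℝ)))]
      simp [Finset.sum_const, card_range, mul_comm]
    have hbs0R : (bs 0 : ℝ) = 0 := by rw [hbs0]; simp
    rw [hm, Finset.sum_range_succ]
    have : (∑ k ∈ range M, ((SB k).card : ℝ)) + ∑ k ∈ range M, ((bs (k+1) - (bs k + d) : ℕ) : ℝ)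
        ≤ (bs M : ℝ) + M * t := by
      rw [htele, hbs0R] at hsplit; linarith
    linarith
  -- put everything together
  have hδn : δ * (ε * n) = t := hεn.symm
  have hfinal : (Ash.card : ℝ) ≤ (1 + δ) * ((n:ℝ) + M * t) := by
    have hexcR : (Exc.card : ℝ) ≤ ∑ k ∈ range M, ((bs (k+1) - (bs k + d) : ℕ) : ℝ) := by
      rw [← Nat.cast_sum]
      exact_mod_cast hexcard
    have hEBsum : ((∑ k ∈ range m, (EB k).card : ℕ) : ℝ) ≤ (1+δ) * ∑ k ∈ range m, ((SB k).card : ℝ) := by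
      rw [Nat.cast_sum, Finset.mul_sum]
      exact Finset.sum_le_sum (fun k _ => hexpB k)
    have hbadnn : (0:ℝ) ≤ ∑ k ∈ range M, ((bs (k+1) - (bs k + d) : ℕ) : ℝ) := by
      apply Finset.sum_nonneg; intros; positivity
    have h1R : (Ash.card : ℝ) ≤ ((∑ k ∈ range m, (EB k).card : ℕ) : ℝ) + (Exc.card : ℝ) := by
      exact_mod_cast h1
    calc (Ash.card : ℝ) ≤ ((∑ k ∈ range m, (EB k).card : ℕ) : ℝ) + (Exc.card : ℝ) := h1R
      _ ≤ (1+δ) * (∑ k ∈ range m, ((SB k).card : ℝ)) + (1+δ) * (∑ k ∈ range M, ((bs (k+1) - (bs k + d) : ℕ) : ℝ)) := by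
          have : (Exc.card : ℝ) ≤ (1+δ) * (∑ k ∈ range M, ((bs (k+1) - (bs k + d) : ℕ) : ℝ)) := by
            nlinarith
          linarith [hEBsum]
      _ = (1+δ) * ((∑ k ∈ range m, ((SB k).card : ℝ)) + (∑ k ∈ range M, ((bs (k+1) - (bs k + d) : ℕ) : ℝ))) := by ring
      _ ≤ (1+δ) * ((n:ℝ) + M * t) := by nlinarith [hsum]
  -- final algebra
  have hMt : (M : ℝ) * t ≤ ((n:ℝ) - 1) * t / s := by
    have h0 : (0:ℝ) ≤ ((n:ℝ) - 1)/s := by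
      have h1n : (1:ℝ) ≤ n := by exact_mod_cast (by omega : 1 ≤ n)
      exact div_nonneg (by linarith) hs.le
    have hfl := Nat.floor_le h0
    have ht0R : (0:ℝ) ≤ t := by positivity
    calc (M:ℝ) * t ≤ (((n:ℝ)-1)/s) * t := by nlinarith
      _ = ((n:ℝ)-1) * t / s := by ring
  have halg : (1 + δ) * ((n:ℝ) + M * t) ≤ ((1 + δ) / (1 - δ)) * n := by
    have h1 : (1 - δ) * (s + t) = s := by
      have : s + t = ε * n := by rw [hs_def]; ring
      rw [this]; nlinarith [hδn]
    have hn1 : (1:ℝ) ≤ n := by exact_mod_cast (by omega : 1 ≤ n)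
    have ht1 : (1:ℝ) ≤ t := by exact_mod_cast ht0
    -- n + M t ≤ n (s+t)/s = n/(1-δ)
    have h2 : (n:ℝ) + M * t ≤ (n:ℝ) * (s + t) / s := by
      have h3 : (n:ℝ) + ((n:ℝ)-1) * t / s ≤ (n:ℝ) * (s+t)/s := by
        rw [le_div_iff₀ hs]
        have e1 : ((n:ℝ) + ((n:ℝ)-1)*t/s) * s = (n:ℝ)*s + ((n:ℝ)-1)*t := by
          field_simp
        rw [e1]; nlinarith
      linarith [hMt]
    have h4 : (n:ℝ) * (s + t) / s = (n:ℝ) / (1 - δ) := by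
      rw [div_eq_div_iff (ne_of_gt hs) (ne_of_gt hδ1')]
      linear_combination (n:ℝ) * h1
    calc (1 + δ) * ((n:ℝ) + M * t) ≤ (1+δ) * ((n:ℝ) * (s+t)/s) := by nlinarith
      _ = (1+δ) * ((n:ℝ)/(1-δ)) := by rw [h4]
      _ = ((1 + δ) / (1 - δ)) * n := by field_simp
  linarith [hfinal, halg]
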